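/- arXiv:1902.04234 — 2 statements merged into one kernel-verified Lean document; each statement's English description precedes it below -/
import Mathlib

section
/- For complex numbers a, b, c with c not a nonpositive integer and Re(c - a - b) > 0, the Gauss hypergeometric series ∑_{m=0}^∞ (a)_m (b)_m / ((c)_m m!) converges and equals Γ(c)Γ(c-a-b)/(Γ(c-a)Γ(c-b)). -/
open Finset Filter Topology

noncomputable def pk (x : ℂ) (m : ℕ) : ℂ := ∏ j ∈ Finset.range m, (x + j)

lemma pk_eq (x : ℂ) (m : ℕ) : (ascPochhammer ℂ m).eval x = pk x m := by
  induction m with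
  | zero => simp [pk]
  | succ n ih => rw [ascPochhammer_succ_eval, ih, pk, pk, Finset.prod_range_succ]

lemma pk_zero (x : ℂ) : pk x 0 = 1 := by simp [pk]

lemma pk_succ (x : ℂ) (m : ℕ) : pk x (m + 1) = pk x m * (x + m) := Finset.prod_range_succ _ _

lemma pk_shift (c : ℂ) (m : ℕ) : pk c m * (c + m) = c * pk (c + 1) m := by
  rw [← pk_succ, pk, Finset.prod_range_succ', pk]
  have : ∀ j ∈ Finset.range m, (c + ((j:ℕ) + 1 : ℕ)) = (c + 1 + (j:ℕ)) := by
    intro j _; push_cast; ring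
  rw [Finset.prod_congr rfl this]
  push_cast; ring

lemma pk_ne_zero {c : ℂ} (hc : ∀ k : ℕ, c ≠ -(k : ℂ)) (m : ℕ) : pk c m ≠ 0 := by
  rw [pk, Finset.prod_ne_zero_iff]
  intro j _ hj
  exact hc j (by linear_combination hj)

lemma gammaSeq_eq (s : ℂ) (n : ℕ) : Complex.GammaSeq s n = (n:ℂ)^s * n.factorial / pk s (n+1) := by
  rw [Complex.GammaSeq, pk]

lemma gammaSeq_ne_zero {s : ℂ} (hs : ∀ k : ℕ, s ≠ -(k : ℂ)) {n : ℕ} (hn : n ≠ 0) :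
    Complex.GammaSeq s n ≠ 0 := by
  rw [gammaSeq_eq]
  apply div_ne_zero (mul_ne_zero _ _) (pk_ne_zero hs _)
  · intro hz; exact (by exact_mod_cast hn : ((n:ℂ)) ≠ 0) ((Complex.cpow_eq_zero_iff _ _).mp hz).1
  · exact_mod_cast n.factorial_ne_zero

/-- the real ascending product -/
noncomputable def rk (x : ℝ) (m : ℕ) : ℝ := ∏ j ∈ Finset.range m, (x + j)

lemma rk_pos {x : ℝ} (hx : 0 < x) (m : ℕ) : 0 < rk x m :=
  Finset.prod_pos fun j _ => by positivity

lemma norm_pk_le (z : ℂ) (m : ℕ) : ‖pk z m‖ ≤ rk ‖z‖ m := by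
  rw [pk, rk]
  refine le_trans (norm_prod_le _ _) (Finset.prod_le_prod (fun j _ => norm_nonneg _) ?_)
  intro j _
  calc ‖z + (j:ℂ)‖ ≤ ‖z‖ + ‖(j:ℂ)‖ := norm_add_le _ _
    _ = ‖z‖ + j := by simp

lemma rk_le_norm_pk {d : ℝ} (hd : 0 ≤ d) {z : ℂ} (hz : ∀ j : ℕ, d + j ≤ ‖z + j‖) (m : ℕ) :
    rk d m ≤ ‖pk z m‖ := by
  rw [pk, rk, norm_prod]
  exact Finset.prod_le_prod (fun j _ => by positivity) (fun j _ => hz j)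

noncomputable def gt' (a b c : ℂ) (m : ℕ) : ℂ := pk a m * pk b m / (pk c m * m.factorial)

lemma gt'_zero (a b c : ℂ) : gt' a b c 0 = 1 := by simp [gt', pk_zero]

lemma gt'_formula {a b c : ℂ} (ha : ∀ k : ℕ, a ≠ -(k : ℂ)) (hb : ∀ k : ℕ, b ≠ -(k : ℂ))
    (hc : ∀ k : ℕ, c ≠ -(k : ℂ)) {n : ℕ} (hn : n ≠ 0) :
    gt' a b c (n+1) = (n:ℂ)^(a+b-c) * Complex.GammaSeq c n /
      (Complex.GammaSeq a n * Complex.GammaSeq b n * (n+1)) := by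
  have hn' : ((n:ℂ)) ≠ 0 := by exact_mod_cast hn
  have key : (n:ℂ)^a * (n:ℂ)^b = (n:ℂ)^(a+b-c) * (n:ℂ)^c := by
    rw [← Complex.cpow_add _ _ hn', ← Complex.cpow_add _ _ hn']; ring_nf
  have hGa := gammaSeq_ne_zero ha hn
  have hGb := gammaSeq_ne_zero hb hn
  have hGc := gammaSeq_ne_zero hc hn
  have hcp : ∀ s : ℂ, (n:ℂ)^s ≠ 0 := fun s hz => hn' ((Complex.cpow_eq_zero_iff _ _).mp hz).1
  have hf' : ((n.factorial : ℕ) : ℂ) ≠ 0 := by exact_mod_cast n.factorial_ne_zero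
  have e : ∀ s : ℂ, (∀ k : ℕ, s ≠ -(k : ℂ)) → pk s (n+1) = (n:ℂ)^s * n.factorial / Complex.GammaSeq s n := by
    intro s hs
    rw [eq_div_iff (gammaSeq_ne_zero hs hn), gammaSeq_eq]
    field_simp [pk_ne_zero hs]
  have hfs : (((n+1).factorial : ℕ) : ℂ) = (n.factorial : ℂ) * ((n:ℂ)+1) := by
    rw [Nat.factorial_succ]; push_cast; ring
  rw [gt', e a ha, e b hb, e c hc, hfs]
  have hn1 : ((n:ℂ)+1) ≠ 0 := by
    have : ((n:ℂ)+1) = ((n+1 : ℕ) : ℂ) := by push_cast; ring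
    rw [this]
    exact_mod_cast Nat.succ_ne_zero n
  set A := (n:ℂ)^a with hA
  set B := (n:ℂ)^b with hB
  set C := (n:ℂ)^c with hC
  set D := (n:ℂ)^(a+b-c) with hD
  set F := ((n.factorial : ℕ) : ℂ) with hF
  set N := ((n:ℂ)+1) with hN
  set Ga := Complex.GammaSeq a n
  set Gb := Complex.GammaSeq b n
  set Gc := Complex.GammaSeq c n
  rw [div_eq_div_iff (mul_ne_zero (div_ne_zero (mul_ne_zero (hcp c) hf') hGc)
    (mul_ne_zero hf' hn1)) (mul_ne_zero (mul_ne_zero hGa hGb) hn1)]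
  field_simp
  linear_combination key

lemma norm_gt'_eq {a b c : ℂ} (ha : ∀ k : ℕ, a ≠ -(k : ℂ)) (hb : ∀ k : ℕ, b ≠ -(k : ℂ))
    (hc : ∀ k : ℕ, c ≠ -(k : ℂ)) {n : ℕ} (hn : n ≠ 0) :
    ‖gt' a b c (n+1)‖ = (n:ℝ)^((a+b-c).re) * ‖Complex.GammaSeq c n‖ /
      (‖Complex.GammaSeq a n‖ * ‖Complex.GammaSeq b n‖ * (n+1)) := by
  rw [gt'_formula ha hb hc hn]
  rw [norm_div, norm_mul, norm_mul, norm_mul]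
  rw [Complex.norm_natCast_cpow_of_pos (Nat.pos_of_ne_zero hn)]
  congr 2
  have : ((n:ℂ)+1) = ((n+1:ℕ) : ℂ) := by push_cast; ring
  rw [this, Complex.norm_natCast]
  push_cast; ring

/-- degenerate vanishing -/
lemma gt'_eq_zero {a : ℂ} {k : ℕ} (hk : a = -(k:ℂ)) (b c : ℂ) {m : ℕ} (hm : k < m) :
    gt' a b c m = 0 := by
  have : pk a m = 0 := by
    rw [pk]
    exact Finset.prod_eq_zero (Finset.mem_range.mpr hm) (by rw [hk]; ring)
  simp [gt', this]

lemma gt'_eq_zero' {a b : ℂ} (c : ℂ)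
    (hd : (∃ k : ℕ, a = -(k:ℂ)) ∨ (∃ k : ℕ, b = -(k:ℂ))) :
    ∀ᶠ m in atTop, gt' a b c m = 0 := by
  rcases hd with ⟨k, hk⟩ | ⟨k, hk⟩
  · filter_upwards [eventually_gt_atTop k] with m hm
    exact gt'_eq_zero hk b c hm
  · filter_upwards [eventually_gt_atTop k] with m hm
    have : pk b m = 0 := by
      rw [pk]; exact Finset.prod_eq_zero (Finset.mem_range.mpr hm) (by rw [hk]; ring)
    simp [gt', this]

/-- Key summability lemma. -/
lemma summable_norm_gt' {a b c : ℂ} (hc : ∀ k : ℕ, c ≠ -(k : ℂ)) (h : 0 < (c - a - b).re) :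
    Summable (fun m => ‖gt' a b c m‖) ∧
      Tendsto (fun m : ℕ => (m:ℝ) * ‖gt' a b c m‖) atTop (𝓝 0) := by
  by_cases hd : (∃ k : ℕ, a = -(k:ℂ)) ∨ (∃ k : ℕ, b = -(k:ℂ))
  · have hev := gt'_eq_zero' c hd
    obtain ⟨N, hN⟩ := eventually_atTop.mp hev
    constructor
    · apply summable_of_ne_finset_zero (s := Finset.range (N+1))
      intro m hm
      rw [Finset.mem_range, not_lt] at hm
      simp [hN m (by omega)]
    · apply Tendsto.congr' _ tendsto_const_nhds
      filter_upwards [hev] with m hm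
      simp [hm]
  · push_neg at hd
    obtain ⟨ha, hb⟩ := hd
    set ρ := (a+b-c).re with hρdef
    have hρ : ρ < 0 := by
      have he : (a+b-c) = -(c-a-b) := by ring
      rw [hρdef, he, Complex.neg_re]; linarith
    set q : ℕ → ℝ := fun n => ‖Complex.GammaSeq c n‖ / (‖Complex.GammaSeq a n‖ * ‖Complex.GammaSeq b n‖) with hq
    have hΓa : Complex.Gamma a ≠ 0 := Complex.Gamma_ne_zero ha
    have hΓb : Complex.Gamma b ≠ 0 := Complex.Gamma_ne_zero hb
    have hqt : Tendsto q atTop (𝓝 (‖Complex.Gamma c‖ / (‖Complex.Gamma a‖ * ‖Complex.Gamma b‖))) := by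
      apply Tendsto.div ((Complex.GammaSeq_tendsto_Gamma c).norm)
        (((Complex.GammaSeq_tendsto_Gamma a).norm).mul ((Complex.GammaSeq_tendsto_Gamma b).norm))
      exact mul_ne_zero (norm_ne_zero_iff.mpr hΓa) (norm_ne_zero_iff.mpr hΓb)
    obtain ⟨C, hC⟩ := hqt.bddAbove_range
    have hC' : ∀ n, q n ≤ C := fun n => hC ⟨n, rfl⟩
    have hqnn : ∀ n, 0 ≤ q n := fun n => by positivity
    have hCnn : 0 ≤ C := le_trans (hqnn 0) (hC' 0)
    have key : ∀ n : ℕ, n ≠ 0 → ‖gt' a b c (n+1)‖ = (n:ℝ)^ρ * q n / ((n:ℝ)+1) := by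
      intro n hn
      rw [norm_gt'_eq ha hb hc hn, hq]
      have hGa : ‖Complex.GammaSeq a n‖ ≠ 0 :=
        norm_ne_zero_iff.mpr (gammaSeq_ne_zero ha hn)
      have hGb : ‖Complex.GammaSeq b n‖ ≠ 0 :=
        norm_ne_zero_iff.mpr (gammaSeq_ne_zero hb hn)
      have hn1 : ((n:ℝ)+1) ≠ 0 := by positivity
      field_simp
      rw [← hρdef]; ring
    have bound : ∀ n : ℕ, n ≠ 0 → ‖gt' a b c (n+1)‖ ≤ C * (n:ℝ)^(ρ-1) := by
      intro n hn
      rw [key n hn]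
      have hn0 : (0:ℝ) < n := by exact_mod_cast Nat.pos_of_ne_zero hn
      calc (n:ℝ)^ρ * q n / ((n:ℝ)+1) ≤ (n:ℝ)^ρ * C / (n:ℝ) := by
            apply div_le_div₀ (by positivity)
              (mul_le_mul_of_nonneg_left (hC' n) (Real.rpow_nonneg hn0.le _)) hn0 (by linarith)
        _ = C * (n:ℝ)^(ρ-1) := by
            rw [Real.rpow_sub hn0, Real.rpow_one]; ring
    have hsum : Summable (fun n : ℕ => C * ((n:ℝ))^(ρ-1)) :=
      (Real.summable_nat_rpow.mpr (by linarith)).mul_left C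
    constructor
    · rw [← summable_nat_add_iff 2]
      apply Summable.of_nonneg_of_le (fun n => norm_nonneg _) (fun n => ?_)
        ((summable_nat_add_iff 1).mpr hsum)
      have := bound (n+1) (Nat.succ_ne_zero n)
      convert this using 2 <;> push_cast <;> ring
    · rw [← tendsto_add_atTop_iff_nat 2]
      have t1 : Tendsto (fun n : ℕ => ((n:ℝ))^ρ) atTop (𝓝 0) := by
        have := (tendsto_rpow_neg_atTop (y := -ρ) (by linarith)).comp
          (tendsto_natCast_atTop_atTop (R := ℝ))
        simpa [Function.comp_def] using this
      have t2 : Tendsto (fun n : ℕ => ((n:ℝ))^ρ * q n) atTop (𝓝 0) := by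
        simpa using t1.mul hqt
      have t3 := t2.comp (tendsto_add_atTop_nat 1)
      apply Tendsto.congr' _ t3
      filter_upwards [] with n
      have hk := key (n+1) (Nat.succ_ne_zero n)
      simp only [Function.comp]
      rw [show n + 1 + 1 = (n+1)+1 by ring] at *
      rw [hk]
      have : ((n:ℝ)+1) + 1 ≠ 0 := by positivity
      push_cast
      field_simp

lemma summable_gt' {a b c : ℂ} (hc : ∀ k : ℕ, c ≠ -(k : ℂ)) (h : 0 < (c - a - b).re) :
    Summable (gt' a b c) := (summable_norm_gt' hc h).1.of_norm

lemma tendsto_mul_gt' {a b c : ℂ} (hc : ∀ k : ℕ, c ≠ -(k : ℂ)) (h : 0 < (c - a - b).re) :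
    Tendsto (fun m : ℕ => (m:ℂ) * gt' a b c m) atTop (𝓝 0) := by
  rw [tendsto_zero_iff_norm_tendsto_zero]
  apply Tendsto.congr _ (summable_norm_gt' hc h).2
  intro m; rw [norm_mul, Complex.norm_natCast]

lemma hc_succ {c : ℂ} (hc : ∀ k : ℕ, c ≠ -(k : ℂ)) : ∀ k : ℕ, c + 1 ≠ -(k : ℂ) := by
  intro k hk
  exact hc (k+1) (by push_cast; linear_combination hk)

lemma hcm_ne {c : ℂ} (hc : ∀ k : ℕ, c ≠ -(k : ℂ)) (m : ℕ) : c + (m:ℂ) ≠ 0 := by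
  intro hz; exact hc m (by linear_combination hz)

lemma gt'_r1 {c : ℂ} (hc : ∀ k : ℕ, c ≠ -(k : ℂ)) (a b : ℂ) (m : ℕ) :
    gt' a b (c+1) m * (c + m) = c * gt' a b c m := by
  have hs := pk_shift c m
  have h1 : pk c m ≠ 0 := pk_ne_zero hc m
  have h2 : pk (c+1) m ≠ 0 := pk_ne_zero (hc_succ hc) m
  have h3 : ((m.factorial : ℕ) : ℂ) ≠ 0 := by exact_mod_cast m.factorial_ne_zero
  rw [gt', gt', div_mul_eq_mul_div, mul_div_assoc',
    div_eq_div_iff (mul_ne_zero h2 h3) (mul_ne_zero h1 h3)]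
  linear_combination (pk a m * pk b m * (m.factorial : ℂ)) * hs

lemma gt'_r2 {c : ℂ} (hc : ∀ k : ℕ, c ≠ -(k : ℂ)) (a b : ℂ) (m : ℕ) :
    gt' a b c (m+1) * ((c + m) * ((m:ℂ)+1)) = gt' a b c m * ((a+m)*(b+m)) := by
  have h1 : pk c m ≠ 0 := pk_ne_zero hc m
  have h2 : pk c (m+1) ≠ 0 := pk_ne_zero hc (m+1)
  have h3 : ((m.factorial : ℕ) : ℂ) ≠ 0 := by exact_mod_cast m.factorial_ne_zero
  have hcm := hcm_ne hc m
  have hfs : (((m+1).factorial : ℕ) : ℂ) = (m.factorial : ℂ) * ((m:ℂ)+1) := by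
    rw [Nat.factorial_succ]; push_cast; ring
  have hm1 : ((m:ℂ)+1) ≠ 0 := by
    have : ((m:ℂ)+1) = ((m+1:ℕ) : ℂ) := by push_cast; ring
    rw [this]; exact_mod_cast Nat.succ_ne_zero m
  rw [gt', gt', hfs, pk_succ a, pk_succ b, pk_succ c]
  field_simp

lemma gauss_step {a b c : ℂ} (hc : ∀ k : ℕ, c ≠ -(k : ℂ)) (h : 0 < (c - a - b).re) :
    ∑' m, gt' a b c m = ((c-a)*(c-b))/(c*(c-a-b)) * ∑' m, gt' a b (c+1) m := by
  have hc1 := hc_succ hc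
  have h1 : 0 < ((c+1) - a - b).re := by
    have : ((c+1) - a - b) = (c - a - b) + 1 := by ring
    rw [this, Complex.add_re, Complex.one_re]; linarith
  have S := summable_gt' hc h
  have S' := summable_gt' hc1 h1
  set T := ∑' m, gt' a b c m
  set T' := ∑' m, gt' a b (c+1) m
  set A : ℕ → ℂ := fun m => c * m * gt' a b c m with hA
  have hAlim : Tendsto A atTop (𝓝 0) := by
    have := (tendsto_mul_gt' hc h).const_mul c
    simpa [hA, mul_assoc] using this
  set f : ℕ → ℂ := fun m => c*(c-a-b) * gt' a b c m - (c-a)*(c-b) * gt' a b (c+1) m with hfdef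
  have hf : ∀ m, f m = A m - A (m+1) := by
    intro m
    have r1 := gt'_r1 hc a b m
    have r2 := gt'_r2 hc a b m
    have hcm := hcm_ne hc m
    apply mul_right_cancel₀ hcm
    simp only [hfdef, hA]
    push_cast
    linear_combination (-(c-a)*(c-b)) * r1 + c * r2
  have hsumf : HasSum f (c*(c-a-b)*T - (c-a)*(c-b)*T') :=
    (S.hasSum.mul_left _).sub (S'.hasSum.mul_left _)
  have h2 := hsumf.tendsto_sum_nat
  have h3 : ∀ N, ∑ m ∈ Finset.range N, f m = A 0 - A N := by
    intro N
    calc ∑ m ∈ Finset.range N, f m = ∑ m ∈ Finset.range N, (A m - A (m+1)) :=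
          Finset.sum_congr rfl (fun m _ => hf m)
      _ = A 0 - A N := Finset.sum_range_sub' A N
  have h4 : Tendsto (fun N => ∑ m ∈ Finset.range N, f m) atTop (𝓝 0) := by
    have : Tendsto (fun N => A 0 - A N) atTop (𝓝 (A 0 - 0)) := tendsto_const_nhds.sub hAlim
    simp only [hA] at this ⊢
    simp only [Nat.cast_zero, mul_zero, zero_mul, sub_zero] at this
    apply Tendsto.congr (fun N => (h3 N).symm)
    simpa [hA] using this
  have heq : c*(c-a-b)*T - (c-a)*(c-b)*T' = 0 := tendsto_nhds_unique h2 h4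
  have hc0 : c ≠ 0 := by
    intro hz; exact hc 0 (by simp [hz])
  have hcab : c - a - b ≠ 0 := by
    intro hz; rw [hz] at h; simp at h
  field_simp
  linear_combination heq

noncomputable def gp (a b c : ℂ) (n : ℕ) : ℂ :=
  ∏ j ∈ Finset.range n, ((c - a + j) * (c - b + j)) / ((c + j) * (c - a - b + j))

lemma hc_add_nat {c : ℂ} (hc : ∀ k : ℕ, c ≠ -(k : ℂ)) (n : ℕ) :
    ∀ k : ℕ, c + (n:ℂ) ≠ -(k : ℂ) := by
  intro k hk
  exact hc (k + n) (by push_cast; linear_combination hk)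

lemma re_add_nat_pos {a b c : ℂ} (h : 0 < (c - a - b).re) (n : ℕ) :
    0 < ((c + (n:ℂ)) - a - b).re := by
  have he : ((c + (n:ℂ)) - a - b) = (c - a - b) + (n:ℂ) := by ring
  rw [he, Complex.add_re, Complex.natCast_re]
  have : (0:ℝ) ≤ n := Nat.cast_nonneg n
  linarith

lemma gauss_iterate {a b c : ℂ} (hc : ∀ k : ℕ, c ≠ -(k : ℂ)) (h : 0 < (c - a - b).re) :
    ∀ n : ℕ, ∑' m, gt' a b c m = gp a b c n * ∑' m, gt' a b (c + (n:ℂ)) m := by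
  intro n
  induction n with
  | zero => simp [gp]
  | succ n ih =>
    have hgp : gp a b c (n+1) = gp a b c n *
        (((c - a + (n:ℂ)) * (c - b + (n:ℂ))) / ((c + (n:ℂ)) * (c - a - b + (n:ℂ)))) :=
      Finset.prod_range_succ _ _
    have hstep := gauss_step (hc_add_nat hc n) (re_add_nat_pos h n)
    have hcast : (c + (n:ℂ)) + 1 = c + ((n+1 : ℕ):ℂ) := by push_cast; ring
    rw [hcast] at hstep
    rw [ih, hgp, hstep,
      show ((c + (n:ℂ)) - a) * ((c + (n:ℂ)) - b) = (c - a + (n:ℂ)) * (c - b + (n:ℂ)) from by ring,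
      show (c + (n:ℂ)) * ((c + (n:ℂ)) - a - b) = (c + (n:ℂ)) * (c - a - b + (n:ℂ)) from by ring]
    ring

lemma rk_nonneg {x : ℝ} (hx : 0 ≤ x) (m : ℕ) : 0 ≤ rk x m :=
  Finset.prod_nonneg fun j _ => by positivity

lemma rk_ge_self {x : ℝ} (hx : 1 ≤ x) : ∀ {m : ℕ}, m ≠ 0 → x ≤ rk x m := by
  intro m
  induction m with
  | zero => intro hm; exact absurd rfl hm
  | succ m ih =>
    intro _
    rcases Nat.eq_zero_or_pos m with rfl | hm
    · simp [rk]
    · have h1 : x ≤ rk x m := ih hm.ne'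
      have h2 : (1:ℝ) ≤ x + m := by
        have : (0:ℝ) ≤ m := Nat.cast_nonneg m
        linarith
      have h3 : rk x (m+1) = rk x m * (x + m) := Finset.prod_range_succ _ _
      nlinarith

lemma pk_real (x : ℝ) (m : ℕ) : pk (x:ℂ) m = ((rk x m : ℝ) : ℂ) := by
  rw [pk, rk]
  push_cast
  rfl

/-- Tannery: `F(a,b;c+n;1) → 1`. -/
lemma tendsto_tsum_gt' {a b c : ℂ} :
    Tendsto (fun n : ℕ => ∑' m, gt' a b (c + (n:ℂ)) m) atTop (𝓝 1) := by
  set d : ℝ := ‖a‖ + ‖b‖ + 2 with hd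
  have hd2 : 2 ≤ d := by have := norm_nonneg a; have := norm_nonneg b; rw [hd]; linarith
  set a' : ℂ := ((‖a‖ : ℝ) : ℂ) with ha'
  set b' : ℂ := ((‖b‖ : ℝ) : ℂ) with hb'
  set d' : ℂ := ((d : ℝ) : ℂ) with hdd'
  have hd' : ∀ k : ℕ, d' ≠ -(k:ℂ) := by
    intro k hk
    have : (d:ℝ) = -(k:ℝ) := by
      have h' := congrArg Complex.re hk
      simpa [hdd'] using h'
    have : (0:ℝ) ≤ k := Nat.cast_nonneg k
    linarith
  have hre : 0 < (d' - a' - b').re := by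
    have : (d' - a' - b') = (((d - ‖a‖ - ‖b‖ : ℝ)) : ℂ) := by push_cast; ring
    rw [this, Complex.ofReal_re, hd]; linarith
  set bound : ℕ → ℝ := fun m => ‖gt' a' b' d' m‖ with hbound
  have hsum : Summable bound := (summable_norm_gt' hd' hre).1
  have hboundval : ∀ m, bound m = rk ‖a‖ m * rk ‖b‖ m / (rk d m * m.factorial) := by
    intro m
    rw [hbound]
    simp only [ha', hb', hdd']
    simp only [gt', pk_real, norm_div, norm_mul, Complex.norm_real, Complex.norm_natCast]
    rw [Real.norm_of_nonneg (rk_nonneg (norm_nonneg a) m),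
      Real.norm_of_nonneg (rk_nonneg (norm_nonneg b) m),
      Real.norm_of_nonneg (rk_nonneg (by linarith : (0:ℝ) ≤ d) m)]
  -- the limit function
  set g : ℕ → ℂ := fun m => if m = 0 then 1 else 0 with hg
  have hgs : ∑' m, g m = 1 := by rw [hg]; exact tsum_ite_eq 0 1
  have hab : ∀ m : ℕ, Tendsto (fun n : ℕ => gt' a b (c + (n:ℂ)) m) atTop (𝓝 (g m)) := by
    intro m
    rcases Nat.eq_zero_or_pos m with rfl | hm
    · simpa [hg] using tendsto_const_nhds.congr (fun n : ℕ => (gt'_zero a b (c+(n:ℂ))).symm)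
    · have hm0 : m ≠ 0 := hm.ne'
      rw [hg]; simp only [hm0, if_false]
      rw [tendsto_zero_iff_norm_tendsto_zero]
      set K : ℝ := ‖pk a m‖ * ‖pk b m‖ / m.factorial with hK
      apply squeeze_zero' (Filter.Eventually.of_forall (fun n => norm_nonneg _))
        (g := fun n : ℕ => K / ((n:ℝ) - ‖c‖))
      · filter_upwards [eventually_ge_atTop (⌈‖c‖ + 1⌉₊)] with n hn
        have hnr : ‖c‖ + 1 ≤ (n:ℝ) := le_trans (Nat.le_ceil _) (by exact_mod_cast hn)
        have hx : (1:ℝ) ≤ (n:ℝ) - ‖c‖ := by linarith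
        have hlow : (n:ℝ) - ‖c‖ ≤ ‖pk (c + (n:ℂ)) m‖ := by
          refine le_trans (rk_ge_self hx hm0) (rk_le_norm_pk (by linarith) ?_ m)
          intro j
          have h1 : ‖((n:ℂ) + (j:ℂ))‖ ≤ ‖c + (n:ℂ) + (j:ℂ)‖ + ‖c‖ := by
            calc ‖((n:ℂ) + (j:ℂ))‖ = ‖(c + (n:ℂ) + (j:ℂ)) + (-c)‖ := by ring_nf
              _ ≤ ‖c + (n:ℂ) + (j:ℂ)‖ + ‖(-c)‖ := norm_add_le _ _
              _ = ‖c + (n:ℂ) + (j:ℂ)‖ + ‖c‖ := by rw [norm_neg]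
          have h2 : ‖((n:ℂ) + (j:ℂ))‖ = (n:ℝ) + (j:ℝ) := by
            rw [show ((n:ℂ) + (j:ℂ)) = (((n:ℝ) + (j:ℝ) : ℝ) : ℂ) from by push_cast; ring,
              Complex.norm_real, Real.norm_of_nonneg (by positivity)]
          rw [h2] at h1
          linarith
        have hplow : (0:ℝ) < ‖pk (c + (n:ℂ)) m‖ := lt_of_lt_of_le (by linarith) hlow
        rw [gt', norm_div, norm_mul, norm_mul, Complex.norm_natCast]
        rw [hK]
        have hfacpos : (0:ℝ) < (m.factorial : ℝ) := by exact_mod_cast m.factorial_pos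
        rw [div_div]
        apply div_le_div₀ (by positivity) le_rfl (mul_pos hfacpos (by linarith))
        calc (m.factorial:ℝ) * ((n:ℝ) - ‖c‖) = ((n:ℝ) - ‖c‖) * (m.factorial:ℝ) := by ring
          _ ≤ ‖pk (c + (n:ℂ)) m‖ * (m.factorial:ℝ) :=
              mul_le_mul_of_nonneg_right hlow hfacpos.le
      · apply Tendsto.div_atTop tendsto_const_nhds
        exact tendsto_atTop_add_const_right atTop (-‖c‖) tendsto_natCast_atTop_atTop
  have hbnd : ∀ᶠ n : ℕ in atTop, ∀ m, ‖gt' a b (c + (n:ℂ)) m‖ ≤ bound m := by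
    filter_upwards [eventually_ge_atTop (⌈d + ‖c‖⌉₊)] with n hn
    intro m
    have hnr : d + ‖c‖ ≤ (n:ℝ) := le_trans (Nat.le_ceil _) (by exact_mod_cast hn)
    rw [hboundval m, gt', norm_div, norm_mul, norm_mul, Complex.norm_natCast]
    have hlow : rk d m ≤ ‖pk (c + (n:ℂ)) m‖ := by
      apply rk_le_norm_pk (by linarith) _ m
      intro j
      have h1 : ‖((n:ℂ) + (j:ℂ))‖ ≤ ‖c + (n:ℂ) + (j:ℂ)‖ + ‖c‖ := by
        calc ‖((n:ℂ) + (j:ℂ))‖ = ‖(c + (n:ℂ) + (j:ℂ)) + (-c)‖ := by ring_nf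
          _ ≤ ‖c + (n:ℂ) + (j:ℂ)‖ + ‖(-c)‖ := norm_add_le _ _
          _ = ‖c + (n:ℂ) + (j:ℂ)‖ + ‖c‖ := by rw [norm_neg]
      have h2 : ‖((n:ℂ) + (j:ℂ))‖ = (n:ℝ) + (j:ℝ) := by
        rw [show ((n:ℂ) + (j:ℂ)) = (((n:ℝ) + (j:ℝ) : ℝ) : ℂ) from by push_cast; ring,
          Complex.norm_real, Real.norm_of_nonneg (by positivity)]
      rw [h2] at h1
      have : (0:ℝ) ≤ j := Nat.cast_nonneg j
      linarith
    have hrkd : (0:ℝ) < rk d m := rk_pos (by linarith) m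
    have hfacpos : (0:ℝ) < (m.factorial : ℝ) := by exact_mod_cast m.factorial_pos
    apply div_le_div₀ (mul_nonneg (rk_nonneg (norm_nonneg a) m) (rk_nonneg (norm_nonneg b) m))
      (mul_le_mul (norm_pk_le a m) (norm_pk_le b m) (norm_nonneg _) (rk_nonneg (norm_nonneg a) m))
      (mul_pos hrkd hfacpos)
    exact mul_le_mul_of_nonneg_right hlow hfacpos.le
  have := tendsto_tsum_of_dominated_convergence hsum hab hbnd
  rwa [hgs] at this

lemma gp_tendsto {a b c : ℂ} (hc : ∀ k : ℕ, c ≠ -(k : ℂ)) (h : 0 < (c - a - b).re) :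
    Tendsto (gp a b c) atTop (𝓝 (Complex.Gamma c * Complex.Gamma (c - a - b) /
      (Complex.Gamma (c - a) * Complex.Gamma (c - b)))) := by
  by_cases hdeg : (∃ k : ℕ, c - a = -(k:ℂ)) ∨ (∃ k : ℕ, c - b = -(k:ℂ))
  · -- degenerate: limit is 0 and gp is eventually 0
    have hzero : Complex.Gamma (c - a) * Complex.Gamma (c - b) = 0 := by
      rcases hdeg with ⟨k, hk⟩ | ⟨k, hk⟩
      · rw [hk, Complex.Gamma_neg_nat_eq_zero, zero_mul]
      · rw [hk, Complex.Gamma_neg_nat_eq_zero, mul_zero]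
    rw [hzero, div_zero]
    apply Tendsto.congr' _ tendsto_const_nhds
    rcases hdeg with ⟨k, hk⟩ | ⟨k, hk⟩ <;>
    · filter_upwards [eventually_gt_atTop k] with n hn
      symm
      rw [gp]
      apply Finset.prod_eq_zero (Finset.mem_range.mpr hn)
      rw [hk]
      simp
  · push_neg at hdeg
    obtain ⟨hca, hcb⟩ := hdeg
    have hcab : ∀ k : ℕ, c - a - b ≠ -(k:ℂ) := by
      intro k hk
      rw [hk] at h
      simp only [Complex.neg_re, Complex.natCast_re] at h
      have : (0:ℝ) ≤ k := Nat.cast_nonneg k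
      linarith
    have keyform : ∀ n : ℕ, n ≠ 0 → gp a b c (n+1) =
        Complex.GammaSeq c n * Complex.GammaSeq (c-a-b) n /
          (Complex.GammaSeq (c-a) n * Complex.GammaSeq (c-b) n) := by
      intro n hn
      have hn' : ((n:ℂ)) ≠ 0 := by exact_mod_cast hn
      have hgp : gp a b c (n+1) = pk (c-a) (n+1) * pk (c-b) (n+1) /
          (pk c (n+1) * pk (c-a-b) (n+1)) := by
        rw [gp, pk, pk, pk, pk, ← Finset.prod_mul_distrib, ← Finset.prod_mul_distrib,
          ← Finset.prod_div_distrib]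
      have e : ∀ s : ℂ, (∀ k : ℕ, s ≠ -(k : ℂ)) →
          pk s (n+1) = (n:ℂ)^s * n.factorial / Complex.GammaSeq s n := by
        intro s hs
        rw [eq_div_iff (gammaSeq_ne_zero hs hn), gammaSeq_eq]
        field_simp [pk_ne_zero hs]
      have key2 : (n:ℂ)^(c-a) * (n:ℂ)^(c-b) = (n:ℂ)^c * (n:ℂ)^(c-a-b) := by
        rw [← Complex.cpow_add _ _ hn', ← Complex.cpow_add _ _ hn']
        ring_nf
      have hGca := gammaSeq_ne_zero hca hn
      have hGcb := gammaSeq_ne_zero hcb hn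
      have hGc := gammaSeq_ne_zero hc hn
      have hGcab := gammaSeq_ne_zero hcab hn
      have hcp : ∀ s : ℂ, (n:ℂ)^s ≠ 0 := fun s hz => hn' ((Complex.cpow_eq_zero_iff _ _).mp hz).1
      have hf' : ((n.factorial : ℕ) : ℂ) ≠ 0 := by exact_mod_cast n.factorial_ne_zero
      rw [hgp, e _ hca, e _ hcb, e _ hc, e _ hcab]
      rw [div_eq_div_iff]
      · field_simp
        linear_combination key2
      · exact mul_ne_zero (div_ne_zero (mul_ne_zero (hcp c) hf') hGc)
          (div_ne_zero (mul_ne_zero (hcp _) hf') hGcab)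
      · exact mul_ne_zero hGca hGcb
    have hΓca : Complex.Gamma (c-a) ≠ 0 := Complex.Gamma_ne_zero hca
    have hΓcb : Complex.Gamma (c-b) ≠ 0 := Complex.Gamma_ne_zero hcb
    have hlim : Tendsto (fun n => Complex.GammaSeq c n * Complex.GammaSeq (c-a-b) n /
        (Complex.GammaSeq (c-a) n * Complex.GammaSeq (c-b) n)) atTop
        (𝓝 (Complex.Gamma c * Complex.Gamma (c - a - b) /
          (Complex.Gamma (c - a) * Complex.Gamma (c - b)))) := by
      apply Tendsto.div
        ((Complex.GammaSeq_tendsto_Gamma c).mul (Complex.GammaSeq_tendsto_Gamma (c-a-b)))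
        ((Complex.GammaSeq_tendsto_Gamma (c-a)).mul (Complex.GammaSeq_tendsto_Gamma (c-b)))
      exact mul_ne_zero hΓca hΓcb
    rw [← tendsto_add_atTop_iff_nat 2]
    apply Tendsto.congr' _ ((hlim.comp (tendsto_add_atTop_nat 1)))
    filter_upwards [] with n
    have := keyform (n+1) (Nat.succ_ne_zero n)
    simp only [Function.comp]
    rw [show n + 2 = (n+1)+1 from rfl, this]

/-- Gauss summation theorem: the Gauss hypergeometric series at `x = 1`
converges and sums to `Γ(c)Γ(c-a-b)/(Γ(c-a)Γ(c-b))`. -/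
theorem gauss_summation (a b c : ℂ) (hc : ∀ k : ℕ, c ≠ -(k : ℂ))
    (h : 0 < (c - a - b).re) :
    HasSum
      (fun m : ℕ =>
        (ascPochhammer ℂ m).eval a * (ascPochhammer ℂ m).eval b /
          ((ascPochhammer ℂ m).eval c * (m.factorial : ℂ)))
      (Complex.Gamma c * Complex.Gamma (c - a - b) /
        (Complex.Gamma (c - a) * Complex.Gamma (c - b))) := by
  have hfun : (fun m : ℕ =>
      (ascPochhammer ℂ m).eval a * (ascPochhammer ℂ m).eval b /
        ((ascPochhammer ℂ m).eval c * (m.factorial : ℂ))) = gt' a b c := by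
    funext m
    rw [gt', pk_eq, pk_eq, pk_eq]
  rw [hfun]
  have S := summable_gt' hc h
  rw [S.hasSum_iff]
  have hiter := gauss_iterate hc h
  have h1 : Tendsto (fun n : ℕ => gp a b c n * ∑' m, gt' a b (c + (n:ℂ)) m) atTop
      (𝓝 ((Complex.Gamma c * Complex.Gamma (c - a - b) /
        (Complex.Gamma (c - a) * Complex.Gamma (c - b))) * 1)) :=
    (gp_tendsto hc h).mul tendsto_tsum_gt'
  have h2 : Tendsto (fun _ : ℕ => ∑' m, gt' a b c m) atTop (𝓝 (∑' m, gt' a b c m)) :=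
    tendsto_const_nhds
  have := tendsto_nhds_unique (h2.congr (fun n => hiter n)) h1
  rw [this, mul_one]
end

section
/- The contiguous relation for the Lauricella function F_A: ∑_{j=1}^n (a_j/b_j) x_j F_A^{(n)}(a+1; a_1,...,a_j+1,...,a_n; b_1,...,b_j+1,...,b_n; x) = F_A^{(n)}(a+1; a_1,...,a_n; b_1,...,b_n; x) − F_A^{(n)}(a; a_1,...,a_n; b_1,...,b_n; x), for |x_1|+...+|x_n| < 1. -/
open Finset

/-- The Lauricella hypergeometric function `F_A^{(n)}` of `n` variables. -/
noncomputable def lauricellaFA (n : ℕ) (a : ℝ) (b c : Fin n → ℝ)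
    (z : Fin n → ℝ) : ℝ :=
  ∑' m : Fin n → ℕ,
    (ascPochhammer ℝ (∑ k, m k)).eval a *
      ∏ k, (ascPochhammer ℝ (m k)).eval (b k) * (z k) ^ (m k) /
        ((ascPochhammer ℝ (m k)).eval (c k) * ((m k).factorial : ℝ))

private lemma asc_eval_prod (a : ℝ) (m : ℕ) :
    (ascPochhammer ℝ m).eval a = ∏ i ∈ Finset.range m, (a + i) := by
  induction m with
  | zero => simp
  | succ m ih => rw [ascPochhammer_succ_eval, ih, Finset.prod_range_succ]

private lemma poch_ratio_bound (a b : ℝ) (hb : ∀ l : ℕ, b ≠ -(l : ℝ)) :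
    ∃ C : ℝ, 0 < C ∧ ∃ K : ℕ, ∀ m : ℕ,
      |(ascPochhammer ℝ m).eval a| ≤ C * ((m : ℝ) + 1) ^ K * |(ascPochhammer ℝ m).eval b| := by
  set ρ : ℕ → ℝ := fun i => |a + i| / |b + i| with hρ
  have hbne : ∀ i : ℕ, b + (i : ℝ) ≠ 0 := by
    intro i h
    exact hb i (by linarith)
  have hρ0 : ∀ i, 0 ≤ ρ i := fun i => div_nonneg (abs_nonneg _) (abs_nonneg _)
  have habs : ∀ m : ℕ, |(ascPochhammer ℝ m).eval a| =
      (∏ i ∈ range m, ρ i) * |(ascPochhammer ℝ m).eval b| := by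
    intro m
    rw [asc_eval_prod, asc_eval_prod, abs_prod, abs_prod, ← Finset.prod_mul_distrib]
    exact Finset.prod_congr rfl fun i _ =>
      (div_mul_cancel₀ _ (abs_ne_zero.mpr (hbne i))).symm
  set K : ℕ := ⌈4 * (|a| + |b|)⌉₊ + 2 with hKdef
  set I : ℕ := ⌈2 * |b|⌉₊ + 1 with hIdef
  have hK : 4 * (|a| + |b|) ≤ (K : ℝ) := by
    have := Nat.le_ceil (4 * (|a| + |b|))
    rw [hKdef]
    push_cast
    linarith
  have hI : 2 * |b| + 1 ≤ (I : ℝ) := by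
    have := Nat.le_ceil (2 * |b|)
    rw [hIdef]
    push_cast
    linarith
  have key : ∀ i : ℕ, (I : ℝ) ≤ i → ρ i ≤ (((i : ℝ) + 2) / ((i : ℝ) + 1)) ^ K := by
    intro i hi
    have hia : 2 * |b| + 1 ≤ (i : ℝ) := le_trans hI hi
    have hpos : 0 < (i : ℝ) - |b| := by
      have := abs_nonneg b; linarith
    have hicast : (0:ℝ) ≤ (i : ℝ) := Nat.cast_nonneg i
    have hlow : (i : ℝ) - |b| ≤ |b + i| := by
      have h1 : |(i : ℝ)| ≤ |b + i| + |b| := by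
        calc |(i : ℝ)| = |(b + i) + (-b)| := by ring_nf
        _ ≤ |b + i| + |(-b)| := abs_add_le _ _
        _ = |b + i| + |b| := by rw [abs_neg]
      rw [abs_of_nonneg hicast] at h1
      linarith
    have hup : |a + i| ≤ |a| + i := by
      calc |a + i| ≤ |a| + |(i : ℝ)| := abs_add_le _ _
      _ = |a| + i := by rw [abs_of_nonneg hicast]
    have step1 : ρ i ≤ (|a| + i) / ((i : ℝ) - |b|) :=
      div_le_div₀ (by positivity) hup hpos hlow
    have hi1 : (0:ℝ) < (i : ℝ) + 1 := by positivity
    have step2 : (|a| + i) / ((i : ℝ) - |b|) ≤ 1 + (K : ℝ) / ((i : ℝ) + 1) := by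
      rw [div_le_iff₀ hpos]
      set q : ℝ := (K : ℝ) / ((i : ℝ) + 1) with hq
      have hq0 : 0 ≤ q := by positivity
      have hqK : q * ((i : ℝ) + 1) = (K : ℝ) := div_mul_cancel₀ _ (ne_of_gt hi1)
      nlinarith [mul_nonneg hq0 (by linarith : (0:ℝ) ≤ (i : ℝ) - 2 * |b| - 1),
        abs_nonneg a, abs_nonneg b]
    have step3 : 1 + (K : ℝ) / ((i : ℝ) + 1) ≤ (((i : ℝ) + 2) / ((i : ℝ) + 1)) ^ K := by
      have hnn : (0:ℝ) ≤ 1 / ((i : ℝ) + 1) := by positivity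
      have hber := one_add_mul_le_pow (a := 1 / ((i : ℝ) + 1)) (by linarith) K
      have h1 : 1 + 1 / ((i : ℝ) + 1) = ((i : ℝ) + 2) / ((i : ℝ) + 1) := by
        field_simp
        ring
      have h2 : (K : ℝ) / ((i : ℝ) + 1) = (K : ℝ) * (1 / ((i : ℝ) + 1)) := by ring
      rw [h2, ← h1]
      exact hber
    exact le_trans step1 (le_trans step2 step3)
  set C : ℝ := 1 + ∑ m' ∈ range (I + 1), ∏ i ∈ range m', ρ i with hCdef
  have hC1 : 1 ≤ C := by
    have : 0 ≤ ∑ m' ∈ range (I + 1), ∏ i ∈ range m', ρ i :=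
      Finset.sum_nonneg fun m' _ => Finset.prod_nonneg fun i _ => hρ0 i
    linarith
  have hC0 : 0 < C := lt_of_lt_of_le one_pos hC1
  refine ⟨C, hC0, K, ?_⟩
  have claim : ∀ m : ℕ, ∏ i ∈ range m, ρ i ≤ C * ((m : ℝ) + 1) ^ K := by
    intro m
    induction m with
    | zero =>
      simp only [range_zero, prod_empty, Nat.cast_zero, zero_add, one_pow, mul_one]
      exact hC1
    | succ m ih =>
      rcases le_or_gt (m + 1) I with hcase | hcase
      · have hmem : m + 1 ∈ range (I + 1) := by rw [Finset.mem_range]; omega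
        have h1 : ∏ i ∈ range (m + 1), ρ i ≤ ∑ m' ∈ range (I + 1), ∏ i ∈ range m', ρ i :=
          Finset.single_le_sum (f := fun m' => ∏ i ∈ range m', ρ i)
            (fun m' _ => Finset.prod_nonneg fun i _ => hρ0 i) hmem
        have hm0 : (0:ℝ) ≤ (m : ℝ) := Nat.cast_nonneg m
        have h2 : (1:ℝ) ≤ ((m : ℝ) + 1 + 1) ^ K := one_le_pow₀ (by linarith)
        have h3 : 0 ≤ C * (((m : ℝ) + 1 + 1) ^ K - 1) :=
          mul_nonneg hC0.le (by linarith)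
        push_cast
        nlinarith
      · have hmI : (I : ℝ) ≤ (m : ℝ) := Nat.cast_le.2 (Nat.lt_succ_iff.mp hcase)
        rw [Finset.prod_range_succ]
        have h2 : (C * ((m : ℝ) + 1) ^ K) * (((m : ℝ) + 2) / ((m : ℝ) + 1)) ^ K
            = C * ((m : ℝ) + 1 + 1) ^ K := by
          rw [mul_assoc, ← mul_pow, mul_div_cancel₀ _ (by positivity : ((m : ℝ) + 1) ≠ 0)]
          congr 1
          ring_nf
        calc (∏ i ∈ range m, ρ i) * ρ m
            ≤ (C * ((m : ℝ) + 1) ^ K) * (((m : ℝ) + 2) / ((m : ℝ) + 1)) ^ K :=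
              mul_le_mul ih (key m hmI) (hρ0 m) (by positivity)
        _ = C * ((m : ℝ) + 1 + 1) ^ K := h2
        _ = C * (((m + 1 : ℕ) : ℝ) + 1) ^ K := by push_cast; ring
  intro m
  rw [habs m]
  exact mul_le_mul_of_nonneg_right (claim m) (abs_nonneg _)

private lemma multinomial_term_le {n : ℕ} (y : Fin n → ℝ) (hy : ∀ k, 0 ≤ y k) (m : Fin n → ℕ) :
    ((∑ k, m k).factorial : ℝ) * ∏ k, y k ^ m k / ((m k).factorial : ℝ) ≤
      (∑ k, y k) ^ (∑ k, m k) := by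
  rw [Finset.sum_pow_eq_sum_piAntidiag]
  have hmem : m ∈ piAntidiag (univ : Finset (Fin n)) (∑ k, m k) := by
    rw [mem_piAntidiag]; exact ⟨rfl, fun i _ => mem_univ i⟩
  have hspecR : ((∑ k, m k).factorial : ℝ) =
      (∏ k, ((m k).factorial : ℝ)) * (Nat.multinomial univ m : ℝ) := by
    exact_mod_cast congrArg (Nat.cast (R := ℝ)) (Nat.multinomial_spec univ m).symm
  have hterm : ((∑ k, m k).factorial : ℝ) * ∏ k, y k ^ m k / ((m k).factorial : ℝ)
      = (Nat.multinomial univ m : ℝ) * ∏ k, y k ^ m k := by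
    rw [Finset.prod_div_distrib, hspecR]
    have hfac : (∏ k, ((m k).factorial : ℝ)) ≠ 0 := by positivity
    field_simp
  rw [hterm]
  exact Finset.single_le_sum
    (f := fun k => (Nat.multinomial univ k : ℝ) * ∏ i, y i ^ k i)
    (fun k _ => mul_nonneg (Nat.cast_nonneg _) (Finset.prod_nonneg fun i _ => pow_nonneg (hy i) _))
    hmem

private lemma summable_geom_poly (K : ℕ) {s : ℝ} (hs0 : 0 ≤ s) (hs1 : s < 1) :
    Summable (fun M : ℕ => ((M : ℝ) + 1) ^ K * s ^ M) := by
  obtain ⟨t, ht0, hts, ht1⟩ : ∃ t : ℝ, 0 < t ∧ s ≤ t ∧ t < 1 :=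
    ⟨(s + 1) / 2, by linarith, by linarith, by linarith⟩
  have hnorm : ‖t‖ < 1 := by rw [Real.norm_eq_abs, abs_of_pos ht0]; exact ht1
  have hb : ∀ M : ℕ, ((M : ℝ) + 1) ^ K * t ^ M
      = ∑ j ∈ range (K + 1), (K.choose j : ℝ) * ((M : ℝ) ^ j * t ^ M) := by
    intro M
    rw [add_pow, Finset.sum_mul]
    refine Finset.sum_congr rfl fun j _ => ?_
    rw [one_pow]
    ring
  have h3 : Summable (fun M : ℕ => ((M : ℝ) + 1) ^ K * t ^ M) := by
    refine Summable.congr ?_ fun M => (hb M).symm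
    exact summable_sum fun j _ =>
      (summable_pow_mul_geometric_of_norm_lt_one j hnorm).mul_left _
  refine h3.of_nonneg_of_le (fun M => by positivity) fun M => ?_
  exact mul_le_mul_of_nonneg_left (pow_le_pow_left₀ hs0 hts M) (by positivity)

private lemma summable_poly_geom_multi (n K : ℕ) {s : ℝ} (hs0 : 0 ≤ s) (hs1 : s < 1) :
    Summable (fun m : Fin n → ℕ => (((∑ k, m k : ℕ) : ℝ) + 1) ^ K * s ^ (∑ k, m k)) := by
  have hsum := summable_geom_poly (K + n) hs0 hs1
  refine summable_of_sum_le (c := ∑' M : ℕ, ((M : ℝ) + 1) ^ (K + n) * s ^ M)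
    (fun m => by positivity) fun u => ?_
  set N : ℕ := u.sup (fun m => ∑ k, m k) with hN
  have hsub : u ⊆ (range (N + 1)).biUnion (fun M => piAntidiag (univ : Finset (Fin n)) M) := by
    intro m hm
    rw [Finset.mem_biUnion]
    refine ⟨∑ k, m k, ?_, ?_⟩
    · rw [Finset.mem_range, Nat.lt_succ_iff]
      exact Finset.le_sup (f := fun m => ∑ k, m k) hm
    · rw [mem_piAntidiag]; exact ⟨rfl, fun i _ => mem_univ i⟩
  have hdisj : ∀ M₁ ∈ range (N+1), ∀ M₂ ∈ range (N+1), M₁ ≠ M₂ →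
      Disjoint (piAntidiag (univ : Finset (Fin n)) M₁) (piAntidiag univ M₂) := by
    intro M₁ _ M₂ _ hne
    rw [Finset.disjoint_left]
    intro m h1 h2
    rw [mem_piAntidiag] at h1 h2
    exact hne (h1.1 ▸ h2.1)
  have hcard : ∀ M : ℕ, (piAntidiag (univ : Finset (Fin n)) M).card ≤ (M + 1) ^ n := by
    intro M
    have : ∀ m ∈ piAntidiag (univ : Finset (Fin n)) M, ∀ k, m k < M + 1 := by
      intro m hm k
      rw [mem_piAntidiag] at hm
      have h := Finset.single_le_sum (f := m) (fun i _ => Nat.zero_le _) (mem_univ k)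
      rw [hm.1] at h
      exact Nat.lt_succ_of_le h
    calc (piAntidiag (univ : Finset (Fin n)) M).card
        ≤ (univ : Finset (Fin n → Fin (M + 1))).card := by
          refine Finset.card_le_card_of_injOn
            (fun m => fun k => (⟨min (m k) M, Nat.lt_succ_of_le (min_le_right _ _)⟩ : Fin (M + 1)))
            (fun m _ => mem_univ _) ?_
          intro m1 h1 m2 h2 heq
          have h1' : ∀ k, m1 k < M + 1 := this m1 h1
          have h2' : ∀ k, m2 k < M + 1 := this m2 h2
          funext k
          have e := congrArg Fin.val (congrFun heq k)
          dsimp only at e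
          rw [Nat.min_eq_left (Nat.lt_succ_iff.mp (h1' k)),
            Nat.min_eq_left (Nat.lt_succ_iff.mp (h2' k))] at e
          exact e
    _ = (M + 1) ^ n := by simp [Fintype.card_fun]
  calc ∑ m ∈ u, (((∑ k, m k : ℕ) : ℝ) + 1) ^ K * s ^ (∑ k, m k)
      ≤ ∑ m ∈ (range (N + 1)).biUnion (fun M => piAntidiag (univ : Finset (Fin n)) M),
          (((∑ k, m k : ℕ) : ℝ) + 1) ^ K * s ^ (∑ k, m k) :=
        Finset.sum_le_sum_of_subset_of_nonneg hsub (fun m _ _ => by positivity)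
  _ = ∑ M ∈ range (N + 1), ∑ m ∈ piAntidiag (univ : Finset (Fin n)) M,
        (((∑ k, m k : ℕ) : ℝ) + 1) ^ K * s ^ (∑ k, m k) := Finset.sum_biUnion hdisj
  _ ≤ ∑ M ∈ range (N + 1), ((M : ℝ) + 1) ^ (K + n) * s ^ M := by
      refine Finset.sum_le_sum fun M _ => ?_
      have : ∑ m ∈ piAntidiag (univ : Finset (Fin n)) M,
          (((∑ k, m k : ℕ) : ℝ) + 1) ^ K * s ^ (∑ k, m k)
          = (piAntidiag (univ : Finset (Fin n)) M).card * (((M : ℝ) + 1) ^ K * s ^ M) := by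
        rw [Finset.sum_congr rfl (fun m hm => ?_), Finset.sum_const, nsmul_eq_mul]
        rw [mem_piAntidiag] at hm
        rw [hm.1]
      rw [this]
      have h1 : ((piAntidiag (univ : Finset (Fin n)) M).card : ℝ) ≤ ((M : ℝ) + 1) ^ n := by
        have := hcard M
        calc ((piAntidiag (univ : Finset (Fin n)) M).card : ℝ) ≤ (((M + 1) ^ n : ℕ) : ℝ) := by
              exact_mod_cast this
        _ = ((M : ℝ) + 1) ^ n := by push_cast; ring
      calc ((piAntidiag (univ : Finset (Fin n)) M).card : ℝ) * (((M : ℝ) + 1) ^ K * s ^ M)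
          ≤ ((M : ℝ) + 1) ^ n * (((M : ℝ) + 1) ^ K * s ^ M) :=
            mul_le_mul_of_nonneg_right h1 (by positivity)
      _ = ((M : ℝ) + 1) ^ (K + n) * s ^ M := by rw [pow_add]; ring
  _ ≤ ∑' M : ℕ, ((M : ℝ) + 1) ^ (K + n) * s ^ M :=
      Summable.sum_le_tsum _ (fun M _ => by positivity) hsum

private lemma asc_eval_ne_zero {b : ℝ} (hb : ∀ l : ℕ, b ≠ -(l : ℝ)) (m : ℕ) :
    (ascPochhammer ℝ m).eval b ≠ 0 := by
  rw [asc_eval_prod]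
  refine Finset.prod_ne_zero_iff.2 fun i _ => fun h => hb i (by linarith)

private lemma summable_term (n : ℕ) (a : ℝ) (aa bb x : Fin n → ℝ)
    (hb : ∀ k, ∀ l : ℕ, bb k ≠ -(l : ℝ)) (hx : ∑ k, |x k| < 1) :
    Summable (fun m : Fin n → ℕ =>
      (ascPochhammer ℝ (∑ k, m k)).eval a *
        ∏ k, (ascPochhammer ℝ (m k)).eval (aa k) * x k ^ m k /
          ((ascPochhammer ℝ (m k)).eval (bb k) * ((m k).factorial : ℝ))) := by
  have h1 : ∀ l : ℕ, (1 : ℝ) ≠ -(l : ℝ) := by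
    intro l h
    have : (0:ℝ) ≤ (l : ℝ) := Nat.cast_nonneg l
    linarith
  obtain ⟨Ca, hCa, Ka, hKa⟩ := poch_ratio_bound a 1 h1
  have hchoice : ∀ k : Fin n, ∃ C : ℝ, 0 < C ∧ ∃ K : ℕ, ∀ m : ℕ,
      |(ascPochhammer ℝ m).eval (aa k)| ≤ C * ((m : ℝ) + 1) ^ K *
        |(ascPochhammer ℝ m).eval (bb k)| :=
    fun k => poch_ratio_bound (aa k) (bb k) (hb k)
  choose C hC K hK using hchoice
  set s : ℝ := ∑ k, |x k| with hs
  have hs0 : 0 ≤ s := Finset.sum_nonneg fun k _ => abs_nonneg _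
  set Kt : ℕ := Ka + ∑ k, K k with hKt
  set Ct : ℝ := Ca * ∏ k, C k with hCt
  have hCt0 : 0 ≤ Ct := mul_nonneg hCa.le (Finset.prod_nonneg fun k _ => (hC k).le)
  have hbound : ∀ m : Fin n → ℕ,
      |(ascPochhammer ℝ (∑ k, m k)).eval a *
        ∏ k, (ascPochhammer ℝ (m k)).eval (aa k) * x k ^ m k /
          ((ascPochhammer ℝ (m k)).eval (bb k) * ((m k).factorial : ℝ))|
      ≤ Ct * ((((∑ k, m k : ℕ) : ℝ) + 1) ^ Kt * s ^ (∑ k, m k)) := by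
    intro m
    set M : ℕ := ∑ k, m k with hM
    have hM1 : (0:ℝ) < (M : ℝ) + 1 := by positivity
    -- rewrite the absolute value
    rw [abs_mul, abs_prod]
    -- bound for the head factor
    have hhead : |(ascPochhammer ℝ M).eval a| ≤ Ca * ((M : ℝ) + 1) ^ Ka * (M.factorial : ℝ) := by
      have := hKa M
      rwa [ascPochhammer_eval_one, Nat.abs_cast] at this
    -- bound for each factor
    have hfac : ∀ k, |(ascPochhammer ℝ (m k)).eval (aa k) * x k ^ m k /
          ((ascPochhammer ℝ (m k)).eval (bb k) * ((m k).factorial : ℝ))|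
        ≤ C k * (((M : ℝ) + 1) ^ K k) * (|x k| ^ m k / ((m k).factorial : ℝ)) := by
      intro k
      rw [abs_div, abs_mul, abs_mul, abs_pow, Nat.abs_cast]
      have hbb : 0 < |(ascPochhammer ℝ (m k)).eval (bb k)| :=
        abs_pos.mpr (asc_eval_ne_zero (hb k) (m k))
      have hf : (0:ℝ) < ((m k).factorial : ℝ) := by
        exact_mod_cast Nat.factorial_pos (m k)
      rw [div_le_iff₀ (by positivity)]
      have hKk : |(ascPochhammer ℝ (m k)).eval (aa k)| ≤
          C k * (((M : ℝ) + 1) ^ K k) * |(ascPochhammer ℝ (m k)).eval (bb k)| := by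
        refine le_trans (hK k (m k)) ?_
        have hmk : ((m k : ℝ) + 1) ≤ ((M : ℝ) + 1) := by
          have : m k ≤ M := Finset.single_le_sum (f := m) (fun i _ => Nat.zero_le _) (mem_univ k)
          have := Nat.cast_le (α := ℝ).mpr this
          linarith
        refine mul_le_mul_of_nonneg_right ?_ (abs_nonneg _)
        refine mul_le_mul_of_nonneg_left ?_ (hC k).le
        exact pow_le_pow_left₀ (by positivity) hmk _
      calc |(ascPochhammer ℝ (m k)).eval (aa k)| * |x k| ^ m k
          ≤ (C k * (((M : ℝ) + 1) ^ K k) * |(ascPochhammer ℝ (m k)).eval (bb k)|) * |x k| ^ m k :=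
            mul_le_mul_of_nonneg_right hKk (by positivity)
      _ = C k * ((M : ℝ) + 1) ^ K k * (|x k| ^ m k / ((m k).factorial : ℝ)) *
            (|(ascPochhammer ℝ (m k)).eval (bb k)| * ((m k).factorial : ℝ)) := by
          field_simp
    -- combine
    have hprod : (∏ k, |(ascPochhammer ℝ (m k)).eval (aa k) * x k ^ m k /
          ((ascPochhammer ℝ (m k)).eval (bb k) * ((m k).factorial : ℝ))|)
        ≤ ∏ k, (C k * (((M : ℝ) + 1) ^ K k) * (|x k| ^ m k / ((m k).factorial : ℝ))) :=
      Finset.prod_le_prod (fun k _ => abs_nonneg _) (fun k _ => hfac k)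
    have hprodeq : (∏ k, (C k * (((M : ℝ) + 1) ^ K k) * (|x k| ^ m k / ((m k).factorial : ℝ))))
        = (∏ k, C k) * ((M : ℝ) + 1) ^ (∑ k, K k) * ∏ k, (|x k| ^ m k / ((m k).factorial : ℝ)) := by
      rw [Finset.prod_mul_distrib, Finset.prod_mul_distrib, Finset.prod_pow_eq_pow_sum]
    have hmulti : (M.factorial : ℝ) * ∏ k, (|x k| ^ m k / ((m k).factorial : ℝ)) ≤ s ^ M :=
      multinomial_term_le (fun k => |x k|) (fun k => abs_nonneg _) m
    have hprodnn : 0 ≤ ∏ k, (|x k| ^ m k / ((m k).factorial : ℝ)) :=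
      Finset.prod_nonneg fun k _ => by positivity
    calc |(ascPochhammer ℝ M).eval a| * ∏ k, |(ascPochhammer ℝ (m k)).eval (aa k) * x k ^ m k /
          ((ascPochhammer ℝ (m k)).eval (bb k) * ((m k).factorial : ℝ))|
        ≤ (Ca * ((M : ℝ) + 1) ^ Ka * (M.factorial : ℝ)) *
            ((∏ k, C k) * ((M : ℝ) + 1) ^ (∑ k, K k) * ∏ k, (|x k| ^ m k / ((m k).factorial : ℝ))) := by
          refine mul_le_mul hhead (le_of_le_of_eq hprod hprodeq)
            (Finset.prod_nonneg fun k _ => abs_nonneg _) (by positivity)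
    _ = (Ca * ∏ k, C k) * (((M : ℝ) + 1) ^ Ka * ((M : ℝ) + 1) ^ (∑ k, K k)) *
          ((M.factorial : ℝ) * ∏ k, (|x k| ^ m k / ((m k).factorial : ℝ))) := by ring
    _ ≤ (Ca * ∏ k, C k) * (((M : ℝ) + 1) ^ Ka * ((M : ℝ) + 1) ^ (∑ k, K k)) * s ^ M := by
          refine mul_le_mul_of_nonneg_left hmulti ?_
          positivity
    _ = Ct * (((M : ℝ) + 1) ^ Kt * s ^ M) := by
          rw [hCt, hKt, pow_add]
          ring
  -- conclude
  have hsummG := (summable_poly_geom_multi n Kt hs0 hx).mul_left Ct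
  exact Summable.of_abs (hsummG.of_nonneg_of_le (fun m => abs_nonneg _) hbound)

private noncomputable def trm (n : ℕ) (a : ℝ) (b c z : Fin n → ℝ) (m : Fin n → ℕ) : ℝ :=
  (ascPochhammer ℝ (∑ k, m k)).eval a *
    ∏ k, (ascPochhammer ℝ (m k)).eval (b k) * (z k) ^ (m k) /
      ((ascPochhammer ℝ (m k)).eval (c k) * ((m k).factorial : ℝ))

private lemma lauricellaFA_eq (n : ℕ) (a : ℝ) (b c z : Fin n → ℝ) :
    lauricellaFA n a b c z = ∑' m, trm n a b c z m := rfl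

private lemma asc_succ_left_eval (a : ℝ) (m : ℕ) :
    (ascPochhammer ℝ (m+1)).eval a = a * (ascPochhammer ℝ m).eval (a+1) := by
  rw [ascPochhammer_succ_left]
  simp [Polynomial.eval_comp]

/-- the summand of the difference -/
private noncomputable def vtrm (n : ℕ) (a : ℝ) (b c z : Fin n → ℝ) (m : Fin n → ℕ) : ℝ :=
  (ascPochhammer ℝ (∑ k, m k - 1)).eval (a + 1) *
    ∏ k, (ascPochhammer ℝ (m k)).eval (b k) * (z k) ^ (m k) /
      ((ascPochhammer ℝ (m k)).eval (c k) * ((m k).factorial : ℝ))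

private lemma diff_eq (n : ℕ) (a : ℝ) (aa bb x : Fin n → ℝ) (m : Fin n → ℕ) :
    trm n (a+1) aa bb x m - trm n a aa bb x m
      = ∑ j, (m j : ℝ) * vtrm n a aa bb x m := by
  rw [trm, trm, vtrm]
  rcases hM : ∑ k, m k with _ | N
  · have hz : ∀ j, m j = 0 := by
      intro j
      have := (Finset.sum_eq_zero_iff.mp hM) j (mem_univ j)
      exact this
    rw [Finset.sum_congr rfl (fun j _ => by rw [hz j, Nat.cast_zero, zero_mul])]
    simp
  · have h1 : (ascPochhammer ℝ (N+1)).eval (a+1) = (ascPochhammer ℝ N).eval (a+1) * (a+1+N) :=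
      ascPochhammer_succ_eval N (a+1)
    have h2 : (ascPochhammer ℝ (N+1)).eval a = a * (ascPochhammer ℝ N).eval (a+1) :=
      asc_succ_left_eval a N
    have hsum : ∑ j, (m j : ℝ) = ((N : ℝ) + 1) := by
      rw [← Nat.cast_sum, hM]
      push_cast
      ring
    rw [← Finset.sum_mul, hsum, h1, h2]
    have : N + 1 - 1 = N := rfl
    rw [this]
    ring

private lemma scalar_id (c A B P Q X F xx : ℝ) (hc : c ≠ 0) :
    c * (A * P * (X * xx) / (B * Q * (c * F))) = A / B * xx * (P * X / (Q * F)) := by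
  rcases eq_or_ne B 0 with hB | hB
  · simp [hB]
  rcases eq_or_ne Q 0 with hQ | hQ
  · simp [hQ]
  rcases eq_or_ne F 0 with hF | hF
  · simp [hF]
  field_simp

private lemma update_add_one_inj (n : ℕ) (j : Fin n) :
    Function.Injective (fun m : Fin n → ℕ => Function.update m j (m j + 1)) := by
  intro m1 m2 h
  funext k
  by_cases hk : k = j
  · subst hk
    have := congrFun h k
    simpa using this
  · have := congrFun h k
    simpa [Function.update_of_ne hk] using this

private lemma update_add_one_range (n : ℕ) (j : Fin n) (m : Fin n → ℕ) (hm : m j ≠ 0) :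
    m ∈ Set.range (fun m : Fin n → ℕ => Function.update m j (m j + 1)) := by
  obtain ⟨N, hN⟩ := Nat.exists_eq_succ_of_ne_zero hm
  refine ⟨Function.update m j N, ?_⟩
  simp only []
  rw [Function.update_self, Function.update_idem]
  have hN' : m j = N + 1 := hN
  rw [← hN']
  exact Function.update_eq_self j m

private lemma sum_update_add_one (n : ℕ) (j : Fin n) (m : Fin n → ℕ) :
    ∑ k, Function.update m j (m j + 1) k = (∑ k, m k) + 1 := by
  rw [Finset.sum_update_of_mem (mem_univ j), ← Finset.erase_eq,
    ← Finset.add_sum_erase univ m (mem_univ j)]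
  ring

private lemma comp_eq (n : ℕ) (a : ℝ) (aa bb x : Fin n → ℝ) (j : Fin n) (m : Fin n → ℕ) :
    ((Function.update m j (m j + 1)) j : ℝ) *
        vtrm n a aa bb x (Function.update m j (m j + 1))
      = aa j / bb j * x j *
        trm n (a+1) (Function.update aa j (aa j + 1)) (Function.update bb j (bb j + 1)) x m := by
  rw [vtrm, trm, sum_update_add_one]
  have hsub : (∑ k, m k) + 1 - 1 = ∑ k, m k := rfl
  rw [hsub, Function.update_self]
  rw [← Finset.mul_prod_erase univ _ (mem_univ j),
    ← Finset.mul_prod_erase univ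
      (fun k => (ascPochhammer ℝ (m k)).eval (Function.update aa j (aa j + 1) k) * x k ^ m k /
        ((ascPochhammer ℝ (m k)).eval (Function.update bb j (bb j + 1) k) * ((m k).factorial : ℝ)))
      (mem_univ j)]
  have herase : ∀ k ∈ univ.erase j,
      (ascPochhammer ℝ (Function.update m j (m j + 1) k)).eval (aa k) *
          x k ^ (Function.update m j (m j + 1) k) /
        ((ascPochhammer ℝ (Function.update m j (m j + 1) k)).eval (bb k) *
          ((Function.update m j (m j + 1) k).factorial : ℝ))
      = (ascPochhammer ℝ (m k)).eval (Function.update aa j (aa j + 1) k) * x k ^ m k /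
        ((ascPochhammer ℝ (m k)).eval (Function.update bb j (bb j + 1) k) *
          ((m k).factorial : ℝ)) := by
    intro k hk
    have hkj : k ≠ j := Finset.ne_of_mem_erase hk
    rw [Function.update_of_ne hkj, Function.update_of_ne hkj, Function.update_of_ne hkj]
  rw [Finset.prod_congr rfl herase]
  rw [Function.update_self, Function.update_self, Function.update_self]
  -- now isolate the j-th factor identity
  set P := ∏ k ∈ univ.erase j,
    (ascPochhammer ℝ (m k)).eval (Function.update aa j (aa j + 1) k) * x k ^ m k /
      ((ascPochhammer ℝ (m k)).eval (Function.update bb j (bb j + 1) k) * ((m k).factorial : ℝ))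
  set E := (ascPochhammer ℝ (∑ k, m k)).eval (a + 1)
  have hfacj : ((m j + 1 : ℕ) : ℝ) *
      ((ascPochhammer ℝ (m j + 1)).eval (aa j) * x j ^ (m j + 1) /
        ((ascPochhammer ℝ (m j + 1)).eval (bb j) * ((m j + 1).factorial : ℝ)))
      = aa j / bb j * x j *
        ((ascPochhammer ℝ (m j)).eval (aa j + 1) * x j ^ m j /
          ((ascPochhammer ℝ (m j)).eval (bb j + 1) * ((m j).factorial : ℝ))) := by
    rw [asc_succ_left_eval (aa j) (m j), asc_succ_left_eval (bb j) (m j),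
      pow_succ, Nat.factorial_succ]
    push_cast
    have hc : ((m j : ℝ) + 1) ≠ 0 := by positivity
    exact scalar_id ((m j : ℝ) + 1) (aa j) (bb j) ((ascPochhammer ℝ (m j)).eval (aa j + 1))
      ((ascPochhammer ℝ (m j)).eval (bb j + 1)) (x j ^ m j) ((m j).factorial : ℝ) (x j) hc
  push_cast at hfacj ⊢
  calc ((m j : ℝ) + 1) * (E * ((ascPochhammer ℝ (m j + 1)).eval (aa j) * x j ^ (m j + 1) /
        ((ascPochhammer ℝ (m j + 1)).eval (bb j) * (((m j + 1).factorial : ℕ) : ℝ)) * P))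
      = E * P * (((m j : ℝ) + 1) * ((ascPochhammer ℝ (m j + 1)).eval (aa j) * x j ^ (m j + 1) /
        ((ascPochhammer ℝ (m j + 1)).eval (bb j) * (((m j + 1).factorial : ℕ) : ℝ)))) := by ring
  _ = E * P * (aa j / bb j * x j *
        ((ascPochhammer ℝ (m j)).eval (aa j + 1) * x j ^ m j /
          ((ascPochhammer ℝ (m j)).eval (bb j + 1) * (((m j).factorial : ℕ) : ℝ)))) := by
      rw [hfacj]
  _ = aa j / bb j * x j * (E * ((ascPochhammer ℝ (m j)).eval (aa j + 1) * x j ^ m j /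
        ((ascPochhammer ℝ (m j)).eval (bb j + 1) * (((m j).factorial : ℕ) : ℝ)) * P)) := by ring

private lemma reindex_tsum (n : ℕ) (a : ℝ) (aa bb x : Fin n → ℝ) (j : Fin n)
    (hS : Summable (trm n (a+1) (Function.update aa j (aa j + 1))
      (Function.update bb j (bb j + 1)) x)) :
    Summable (fun m : Fin n → ℕ => (m j : ℝ) * vtrm n a aa bb x m) ∧
    ∑' m : Fin n → ℕ, (m j : ℝ) * vtrm n a aa bb x m
      = aa j / bb j * x j * lauricellaFA n (a+1) (Function.update aa j (aa j + 1))
          (Function.update bb j (bb j + 1)) x := by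
  set f := fun m : Fin n → ℕ => Function.update m j (m j + 1) with hf
  set g := fun m : Fin n → ℕ => (m j : ℝ) * vtrm n a aa bb x m with hg
  have hinj := update_add_one_inj n j
  have hvan : ∀ m ∉ Set.range f, g m = 0 := by
    intro m hm
    by_cases h : m j = 0
    · show (m j : ℝ) * vtrm n a aa bb x m = 0
      rw [h, Nat.cast_zero, zero_mul]
    · exact absurd (update_add_one_range n j m h) hm
  have hcomp : ∀ m, g (f m) = aa j / bb j * x j *
      trm n (a+1) (Function.update aa j (aa j + 1)) (Function.update bb j (bb j + 1)) x m :=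
    fun m => comp_eq n a aa bb x j m
  have hsum_comp : Summable (g ∘ f) :=
    (hS.mul_left (aa j / bb j * x j)).congr fun m => (hcomp m).symm
  have hsg : Summable g := (hinj.summable_iff hvan).mp hsum_comp
  refine ⟨hsg, ?_⟩
  have hsupp : Function.support g ⊆ Set.range f := by
    intro m hm
    by_contra h
    exact hm (hvan m h)
  have h1 : ∑' m, g (f m) = ∑' m, g m := hinj.tsum_eq hsupp
  rw [← h1, tsum_congr hcomp, tsum_mul_left, lauricellaFA_eq]

/-- Contiguous relation for the Lauricella function `F_A`. -/
theorem lauricellaFA_contiguous (n : ℕ) (a : ℝ) (aa bb : Fin n → ℝ)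
    (hb : ∀ k, ∀ l : ℕ, bb k ≠ -(l : ℝ)) (x : Fin n → ℝ)
    (hx : ∑ k, |x k| < 1) :
    (∑ j, aa j / bb j * x j *
        lauricellaFA n (a + 1) (Function.update aa j (aa j + 1))
          (Function.update bb j (bb j + 1)) x) =
      lauricellaFA n (a + 1) aa bb x - lauricellaFA n a aa bb x := by
  have hb' : ∀ j : Fin n, ∀ k, ∀ l : ℕ, Function.update bb j (bb j + 1) k ≠ -(l : ℝ) := by
    intro j k l
    by_cases hk : k = j
    · subst hk
      rw [Function.update_self]
      intro h
      exact hb k (l + 1) (by push_cast; linarith)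
    · rw [Function.update_of_ne hk]
      exact hb k l
  have hS1 : Summable (trm n (a+1) aa bb x) := summable_term n (a+1) aa bb x hb hx
  have hS0 : Summable (trm n a aa bb x) := summable_term n a aa bb x hb hx
  have hSj : ∀ j : Fin n, Summable (trm n (a+1) (Function.update aa j (aa j + 1))
      (Function.update bb j (bb j + 1)) x) :=
    fun j => summable_term n (a+1) _ _ x (hb' j) hx
  have hR := fun j : Fin n => reindex_tsum n a aa bb x j (hSj j)
  calc ∑ j, aa j / bb j * x j * lauricellaFA n (a + 1) (Function.update aa j (aa j + 1))
          (Function.update bb j (bb j + 1)) x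
      = ∑ j, ∑' m : Fin n → ℕ, (m j : ℝ) * vtrm n a aa bb x m :=
        Finset.sum_congr rfl fun j _ => ((hR j).2).symm
  _ = ∑' m : Fin n → ℕ, ∑ j, (m j : ℝ) * vtrm n a aa bb x m :=
        (Summable.tsum_finsetSum fun j _ => (hR j).1).symm
  _ = ∑' m : Fin n → ℕ, (trm n (a+1) aa bb x m - trm n a aa bb x m) :=
        tsum_congr fun m => (diff_eq n a aa bb x m).symm
  _ = lauricellaFA n (a + 1) aa bb x - lauricellaFA n a aa bb x := by
        rw [lauricellaFA_eq, lauricellaFA_eq]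
        exact Summable.tsum_sub hS1 hS0
end
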